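/- Let m ≥ 1 be a natural number, r an integer, and s a complex number. With Γ_m(s) = π^{m(m−1)/4} · ∏_{i=0}^{m−1} Γ(s − i/2) and κ_m = (m+1)/2, the identity Γ_m(s) · Γ_m(κ_m − s) = (−1)^{m·r} · Γ_m(s + r) · Γ_m(κ_m − r − s) holds for every s ∈ ℂ. (This is the cross-multiplied form of Γ_m(s)/Γ_m(s+r) = (−1)^{mr} Γ_m(κ_m − r − s)/Γ_m(κ_m − s).) -/

import Mathlib

open Complex

/-- The Siegel Gamma factor `Γ_m(s) = π^{m(m-1)/4} · ∏_{i=0}^{m-1} Γ(s - i/2)`. -/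
noncomputable def GammaSiegel (m : ℕ) (s : ℂ) : ℂ :=
  (Real.pi : ℂ) ^ (((m * (m - 1) : ℕ) : ℂ) / 4) *
    ∏ i ∈ Finset.range m, Complex.Gamma (s - (i : ℂ) / 2)

lemma sin_shift (z : ℂ) (r : ℤ) : Complex.sin (z + r * ↑Real.pi) = (-1) ^ r * Complex.sin z := by
  simpa [← Int.cast_negOnePow ℂ] using Complex.sin_antiperiodic.add_int_mul_eq r (x := z)

lemma neg_one_zpow_inv (r : ℤ) : ((-1 : ℂ) ^ r)⁻¹ = (-1 : ℂ) ^ r := by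
  rw [← zpow_neg, show -r = (-1) * r by ring, zpow_mul]
  norm_num

lemma prod_reflect (m : ℕ) (a : ℂ) :
    ∏ i ∈ Finset.range m, Complex.Gamma (((m : ℂ) + 1) / 2 - a - (i : ℂ) / 2) =
      ∏ i ∈ Finset.range m, Complex.Gamma (1 - (a - (i : ℂ) / 2)) := by
  rw [← Finset.prod_range_reflect]
  refine Finset.prod_congr rfl fun i hi => ?_
  have hi' : i < m := Finset.mem_range.mp hi
  congr 1
  have h1 : (1 : ℕ) ≤ m := by omega
  have h2 : i ≤ m - 1 := by omega
  rw [Nat.cast_sub h2, Nat.cast_sub h1]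
  push_cast
  ring

theorem stmt_10 (m : ℕ) (hm : 1 ≤ m) (r : ℤ) (s : ℂ) :
    GammaSiegel m s * GammaSiegel m (((m : ℂ) + 1) / 2 - s) =
      (-1 : ℂ) ^ ((m : ℤ) * r) * GammaSiegel m (s + (r : ℂ)) *
        GammaSiegel m (((m : ℂ) + 1) / 2 - (r : ℂ) - s) := by
  have key : ∀ a : ℂ,
      (∏ i ∈ Finset.range m, Complex.Gamma (a - (i : ℂ) / 2)) *
        ∏ i ∈ Finset.range m, Complex.Gamma (((m : ℂ) + 1) / 2 - a - (i : ℂ) / 2) =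
      ∏ i ∈ Finset.range m, ((Real.pi : ℂ) / Complex.sin (Real.pi * (a - (i : ℂ) / 2))) := by
    intro a
    rw [prod_reflect, ← Finset.prod_mul_distrib]
    exact Finset.prod_congr rfl fun i _ => Complex.Gamma_mul_Gamma_one_sub _
  have hsin : ∀ i : ℕ, (Real.pi : ℂ) / Complex.sin (Real.pi * (s + (r : ℂ) - (i : ℂ) / 2))
      = (-1 : ℂ) ^ r * ((Real.pi : ℂ) / Complex.sin (Real.pi * (s - (i : ℂ) / 2))) := by
    intro i
    have h : (Real.pi : ℂ) * (s + (r : ℂ) - (i : ℂ) / 2)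
        = (Real.pi : ℂ) * (s - (i : ℂ) / 2) + (r : ℂ) * Real.pi := by ring
    rw [h, sin_shift, mul_comm ((-1 : ℂ) ^ r), ← div_div,
      div_eq_mul_inv ((Real.pi : ℂ) / _), neg_one_zpow_inv, mul_comm]
  have hfac : (-1 : ℂ) ^ ((m : ℤ) * r) * ((-1 : ℂ) ^ r) ^ m = 1 := by
    rw [← zpow_natCast ((-1 : ℂ) ^ r), ← zpow_mul,
      ← zpow_add₀ (by norm_num : (-1 : ℂ) ≠ 0),
      show (m : ℤ) * r + r * (m : ℤ) = 2 * ((m : ℤ) * r) by ring, zpow_mul]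
    norm_num
  have main : (∏ i ∈ Finset.range m, Complex.Gamma (s - (i : ℂ) / 2)) *
      ∏ i ∈ Finset.range m, Complex.Gamma (((m : ℂ) + 1) / 2 - s - (i : ℂ) / 2)
      = (-1 : ℂ) ^ ((m : ℤ) * r) *
        ((∏ i ∈ Finset.range m, Complex.Gamma (s + (r : ℂ) - (i : ℂ) / 2)) *
          ∏ i ∈ Finset.range m, Complex.Gamma (((m : ℂ) + 1) / 2 - (r : ℂ) - s - (i : ℂ) / 2)) := by
    have hre : ∏ i ∈ Finset.range m, Complex.Gamma (((m : ℂ) + 1) / 2 - (r : ℂ) - s - (i : ℂ) / 2)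
        = ∏ i ∈ Finset.range m, Complex.Gamma (((m : ℂ) + 1) / 2 - (s + (r : ℂ)) - (i : ℂ) / 2) :=
      Finset.prod_congr rfl fun i _ => by ring_nf
    rw [hre, key (s + (r : ℂ)), key s,
      Finset.prod_congr rfl fun i (_ : i ∈ Finset.range m) => hsin i,
      Finset.prod_mul_distrib, Finset.prod_const, Finset.card_range, ← mul_assoc, hfac, one_mul]
  simp only [GammaSiegel]
  calc ((Real.pi : ℂ) ^ (((m * (m - 1) : ℕ) : ℂ) / 4) *
        ∏ i ∈ Finset.range m, Complex.Gamma (s - (i : ℂ) / 2)) *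
      ((Real.pi : ℂ) ^ (((m * (m - 1) : ℕ) : ℂ) / 4) *
        ∏ i ∈ Finset.range m, Complex.Gamma (((m : ℂ) + 1) / 2 - s - (i : ℂ) / 2))
      = ((Real.pi : ℂ) ^ (((m * (m - 1) : ℕ) : ℂ) / 4)) ^ 2 *
        ((∏ i ∈ Finset.range m, Complex.Gamma (s - (i : ℂ) / 2)) *
          ∏ i ∈ Finset.range m, Complex.Gamma (((m : ℂ) + 1) / 2 - s - (i : ℂ) / 2)) := by ring
    _ = _ := by rw [main]; ring
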